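/- Let a^{(n)}_{n-k} be discrete kernels with mutually inverse DOC kernels θ^{(n)}_{n-k}, and define the DCC kernels p^{(n)}_{n-k} = Σ_{j=k}^{n} θ^{(j)}_{j-k} for 1 ≤ k ≤ n. Then Σ_{j=k}^{n} p^{(n)}_{n-j} a^{(j)}_{j-k} = 1 for all 1 ≤ k ≤ n. -/

import Mathlib

/-- The DCC kernels `p^{(n)}_{n-k} = Σ_{j=k}^{n} θ^{(j)}_{j-k}` are complementary to the
kernels `a^{(n)}_{n-k}`: `Σ_{j=k}^{n} p^{(n)}_{n-j} a^{(j)}_{j-k} = 1`. -/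
theorem DCC_complementary (a θ p : ℕ → ℕ → ℝ)
    (ha : ∀ n : ℕ, 1 ≤ n → a n 0 ≠ 0)
    (hθ1 : ∀ n k : ℕ, 1 ≤ k → k ≤ n →
      ∑ j ∈ Finset.Icc k n, θ n (n - j) * a j (j - k) = if n = k then 1 else 0)
    (hp : ∀ n k : ℕ, 1 ≤ k → k ≤ n →
      p n (n - k) = ∑ j ∈ Finset.Icc k n, θ j (j - k))
    (n k : ℕ) (hk : 1 ≤ k) (hkn : k ≤ n) :
    ∑ j ∈ Finset.Icc k n, p n (n - j) * a j (j - k) = 1 := by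
  have step : ∀ j ∈ Finset.Icc k n,
      p n (n - j) * a j (j - k) = ∑ i ∈ Finset.Icc j n, θ i (i - j) * a j (j - k) := by
    intro j hj
    rw [Finset.mem_Icc] at hj
    rw [hp n j (hk.trans hj.1) hj.2, Finset.sum_mul]
  rw [Finset.sum_congr rfl step]
  rw [Finset.sum_comm' (t' := Finset.Icc k n) (s' := fun i => Finset.Icc k i)
    (by intro x y; simp only [Finset.mem_Icc]; omega)]
  have : ∀ i ∈ Finset.Icc k n,
      ∑ j ∈ Finset.Icc k i, θ i (i - j) * a j (j - k) = if i = k then 1 else 0 := by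
    intro i hi
    rw [Finset.mem_Icc] at hi
    exact hθ1 i k hk hi.1
  rw [Finset.sum_congr rfl this, Finset.sum_ite_eq' (Finset.Icc k n) k]
  simp [hk, hkn]
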